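/- A normed space X is complete (a Banach space) if and only if its closed unit ball is cs-compact, i.e., for every sequence {a_n} in the closed unit ball and nonnegative reals {λ_n} with Σλ_n = 1, the series Σλ_n a_n converges to a point of the closed unit ball. -/

import Mathlib

/-- A real normed space is a Banach space if and only if its closed unit
ball is cs-compact. -/
theorem completeSpace_iff_closedBall_csCompact
    {X : Type*} [NormedAddCommGroup X] [NormedSpace ℝ X] :
    CompleteSpace X ↔
      ∀ (a : ℕ → X) (l : ℕ → ℝ), (∀ n, a n ∈ Metric.closedBall (0 : X) 1) →
        (∀ n, 0 ≤ l n) → HasSum l 1 →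
        ∃ x ∈ Metric.closedBall (0 : X) 1, HasSum (fun n => l n • a n) x := by
  constructor
  · intro hX a l ha hl hsum
    have hball : ∀ n, ‖a n‖ ≤ 1 := by
      intro n
      simpa [Metric.mem_closedBall, dist_eq_norm] using ha n
    have hbnd : ∀ n, ‖l n • a n‖ ≤ l n := by
      intro n
      rw [norm_smul, Real.norm_of_nonneg (hl n)]
      calc l n * ‖a n‖ ≤ l n * 1 := by
            exact mul_le_mul_of_nonneg_left (hball n) (hl n)
        _ = l n := mul_one _
    have hnorm : Summable (fun n => ‖l n • a n‖) :=
      Summable.of_nonneg_of_le (fun n => norm_nonneg _) hbnd hsum.summable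
    have hs : Summable (fun n => l n • a n) := hnorm.of_norm
    refine ⟨∑' n, l n • a n, ?_, hs.hasSum⟩
    rw [Metric.mem_closedBall, dist_zero_right]
    calc ‖∑' n, l n • a n‖ ≤ ∑' n, ‖l n • a n‖ := norm_tsum_le_tsum_norm hnorm
      _ ≤ ∑' n, l n := Summable.tsum_le_tsum hbnd hnorm hsum.summable
      _ = 1 := hsum.tsum_eq
  · intro h
    apply NormedAddCommGroup.completeSpace_of_summable_imp_tendsto
    intro u hu
    set e : ℕ → ℝ := fun n => ‖u n‖ + (1/2) ^ n with he
    have hepos : ∀ n, 0 < e n := fun n => by positivity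
    have hesum : Summable e := hu.add summable_geometric_two
    set C : ℝ := ∑' n, e n with hC
    have hCpos : 0 < C := Summable.tsum_pos hesum (fun n => (hepos n).le) 0 (hepos 0)
    set l : ℕ → ℝ := fun n => e n / C with hldef
    set a : ℕ → X := fun n => (e n)⁻¹ • u n with hadef
    have ha : ∀ n, a n ∈ Metric.closedBall (0 : X) 1 := by
      intro n
      rw [Metric.mem_closedBall, dist_zero_right, hadef]
      simp only [norm_smul, norm_inv, Real.norm_of_nonneg (hepos n).le]
      rw [inv_mul_le_one₀ (hepos n)]
      simp [he, le_add_of_nonneg_right, pow_nonneg]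
    have hl : ∀ n, 0 ≤ l n := fun n => div_nonneg (hepos n).le hCpos.le
    have hlsum : HasSum l 1 := by
      have := hesum.hasSum.div_const C
      simpa [hldef, ← hC, div_self hCpos.ne'] using this
    obtain ⟨x, _, hx⟩ := h a l ha hl hlsum
    have heq : (fun n => l n • a n) = fun n => C⁻¹ • u n := by
      ext n
      rw [hldef, hadef, smul_smul]
      congr 1
      field_simp
      simp [(hepos n).ne']
    rw [heq] at hx
    have hx' : HasSum u (C • x) := by
      have := hx.const_smul (C : ℝ)
      simpa [smul_smul, mul_inv_cancel₀ hCpos.ne'] using this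
    refine ⟨C • x, ?_⟩
    exact hx'.tendsto_sum_nat
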